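/- Let (x, y) be drawn from the centered bivariate Gaussian distribution on ℝ² with covariance matrix having entries Var(x) = σ_x², Cov(x,y) = σ_{xy}, Var(y) = σ_y² > 0. Then for nonnegative integers k, ℓ: if k ≥ ℓ and k − ℓ is even, E[ h_k(x) · h_ℓ(y/σ_y) ] = √(k!/ℓ!) · ( 1 / ( ((k−ℓ)/2)! · 2^{(k−ℓ)/2} ) ) · (σ_x² − 1)^{(k−ℓ)/2} · (σ_{xy}/σ_y)^{ℓ}; otherwise (if k < ℓ or k − ℓ is odd) the expectation is 0. -/

import Mathlib

open MeasureTheory ProbabilityTheory Matrix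

/-- The standard Gaussian measure on `ι → ℝ`. -/
noncomputable def stdGaussian (ι : Type*) [Fintype ι] : Measure (ι → ℝ) :=
  Measure.pi fun _ => gaussianReal 0 1

open Classical in
/-- Square root of a positive semidefinite matrix (junk value `0` otherwise). -/
noncomputable def matSqrt {ι : Type*} [Fintype ι] [DecidableEq ι]
    (A : Matrix ι ι ℝ) : Matrix ι ι ℝ :=
  if h : A.PosSemidef then
    h.1.eigenvectorUnitary.1 * diagonal ((↑) ∘ Real.sqrt ∘ h.1.eigenvalues) *
      (star h.1.eigenvectorUnitary : Matrix ι ι ℝ)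
  else 0

/-- The centered Gaussian measure on `ι → ℝ` with covariance `A` (for `A` PSD),
realized as the pushforward of the standard Gaussian under `A ^ (1/2)`. -/
noncomputable def gaussianOf {ι : Type*} [Fintype ι] [DecidableEq ι]
    (A : Matrix ι ι ℝ) : Measure (ι → ℝ) :=
  (stdGaussian ι).map fun x => matSqrt A *ᵥ x

lemma measurable_matMulVec {ι : Type*} [Fintype ι] (M : Matrix ι ι ℝ) :
    Measurable fun x : ι → ℝ => M *ᵥ x := by
  refine measurable_pi_lambda _ fun i => ?_
  simp only [Matrix.mulVec, dotProduct]
  first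
  | fun_prop
  | exact Finset.measurable_sum Finset.univ fun j _ => measurable_const.mul (measurable_pi_apply j)

instance stdGaussian.instIsProbabilityMeasure (ι : Type*) [Fintype ι] :
    IsProbabilityMeasure (stdGaussian ι) := by
  unfold _root_.stdGaussian; infer_instance

instance gaussianOf.instIsProbabilityMeasure {ι : Type*} [Fintype ι] [DecidableEq ι]
    (A : Matrix ι ι ℝ) : IsProbabilityMeasure (gaussianOf A) :=
  Measure.isProbabilityMeasure_map (measurable_matMulVec _).aemeasurable

/-- Loewner order: `A ⪯ B`. -/
def loewnerLE {ι : Type*} [Fintype ι] (A B : Matrix ι ι ℝ) : Prop := (B - A).PosSemidef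

/-- The Euclidean (`ℓ²`) operator norm of a matrix. -/
noncomputable def opNorm {d : ℕ} (M : Matrix (Fin d) (Fin d) ℝ) : ℝ :=
  ‖Matrix.toEuclideanCLM (𝕜 := ℝ) M‖

/-- Euclidean norm of a vector. -/
noncomputable def euclNorm {ι : Type*} [Fintype ι] (v : ι → ℝ) : ℝ :=
  Real.sqrt (v ⬝ᵥ v)

/-- Normalized probabilist's Hermite polynomial function. -/
noncomputable def hermiteFn (k : ℕ) (x : ℝ) : ℝ :=
  (Polynomial.aeval x (Polynomial.hermite k)) / Real.sqrt (Nat.factorial k)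

/-- The uniform distribution on the unit sphere, realized as the pushforward of the
standard Gaussian under normalization. -/
noncomputable def uniformSphere (d : ℕ) : Measure (Fin d → ℝ) :=
  (stdGaussian (Fin d)).map fun x => (euclNorm x)⁻¹ • x




namespace Stm12

open MvPolynomial Real
open scoped ENNReal NNReal

noncomputable def γ : Measure ℝ := gaussianReal 0 1

instance : IsProbabilityMeasure γ := by unfold γ; infer_instance

lemma gamma_eq : γ = volume.withDensity fun x => ((gaussianPDFReal 0 1 x).toNNReal : ℝ≥0∞) :=
by
  unfold γ
  rw [gaussianReal_of_var_ne_zero 0 one_ne_zero]; rfl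

lemma pdf_eq (x : ℝ) : gaussianPDFReal 0 1 x
    = (Real.sqrt (2 * π))⁻¹ * Real.exp (-(1/2) * x ^ 2) := by
  rw [gaussianPDFReal]
  norm_num
  left; ring

lemma meas_pdf : Measurable fun x => (gaussianPDFReal 0 1 x).toNNReal :=
  (measurable_gaussianPDFReal 0 1).real_toNNReal

lemma integral_gamma (f : ℝ → ℝ) :
    ∫ x, f x ∂γ = ∫ x, gaussianPDFReal 0 1 x * f x := by
  rw [gamma_eq, integral_withDensity_eq_integral_smul meas_pdf]
  refine integral_congr_ae (.of_forall fun x => ?_)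
  simp [NNReal.smul_def, Real.coe_toNNReal _ (gaussianPDFReal_nonneg 0 1 x)]

lemma integrable_gamma_iff (f : ℝ → ℝ) :
    Integrable f γ ↔ Integrable (fun x => gaussianPDFReal 0 1 x * f x) volume := by
  rw [gamma_eq, integrable_withDensity_iff_integrable_smul meas_pdf]
  constructor <;> intro h <;> refine h.congr (.of_forall fun x => ?_) <;>
    simp [NNReal.smul_def, Real.coe_toNNReal _ (gaussianPDFReal_nonneg 0 1 x)]

lemma intExp (n : ℕ) : Integrable (fun x : ℝ => x ^ n * Real.exp (-(1/2) * x ^ 2)) volume := by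
  have := integrable_rpow_mul_exp_neg_mul_sq (b := 1/2) (by norm_num) (s := (n : ℝ))
    (by exact_mod_cast neg_one_lt_zero.trans_le (Nat.cast_nonneg n))
  refine this.congr (.of_forall fun x => ?_)
  simp [Real.rpow_natCast]

lemma intPow (n : ℕ) : Integrable (fun x : ℝ => x ^ n) γ := by
  rw [integrable_gamma_iff]
  refine ((intExp n).const_mul ((Real.sqrt (2 * π))⁻¹)).congr (.of_forall fun x => ?_)
  simp only [pdf_eq]; ring

noncomputable def mmt (n : ℕ) : ℝ := ∫ x, x ^ n ∂γ

lemma mmt_zero : mmt 0 = 1 := by simp [mmt]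

lemma mmt_rec (n : ℕ) : mmt (n + 1) = n * mmt (n - 1) := by
  have hderiv : ∀ x : ℝ, HasDerivAt (fun x : ℝ => x ^ n * Real.exp (-(1/2) * x ^ 2))
      ((n * x ^ (n - 1) - x ^ (n + 1)) * Real.exp (-(1/2) * x ^ 2)) x := by
    intro x
    have h1 : HasDerivAt (fun x : ℝ => x ^ n) (n * x ^ (n - 1)) x := hasDerivAt_pow n x
    have h2 : HasDerivAt (fun x : ℝ => Real.exp (-(1/2) * x ^ 2))
        (Real.exp (-(1/2) * x ^ 2) * (-(1/2) * (2 * x))) x := by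
      exact (Real.hasDerivAt_exp _).comp x (((hasDerivAt_pow 2 x).const_mul (-(1/2))).congr_deriv
        (by ring))
    have := h1.fun_mul h2
    refine this.congr_deriv ?_
    ring
  have hzero : ∫ x, ((n : ℝ) * x ^ (n - 1) - x ^ (n + 1)) * Real.exp (-(1/2) * x ^ 2) = 0 := by
    refine integral_eq_zero_of_hasDerivAt_of_integrable hderiv ?_ (intExp n)
    refine (((intExp (n-1)).const_mul (n : ℝ)).sub (intExp (n+1))).congr (.of_forall fun x => ?_)
    simp only [Pi.sub_apply]
    ring
  have hsplit : ∫ x, ((n : ℝ) * x ^ (n - 1) - x ^ (n + 1)) * Real.exp (-(1/2) * x ^ 2)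
      = (n : ℝ) * (∫ x, x ^ (n-1) * Real.exp (-(1/2) * x ^ 2))
        - ∫ x, x ^ (n+1) * Real.exp (-(1/2) * x ^ 2) := by
    rw [← integral_const_mul, ← integral_sub (((intExp (n-1)).const_mul _)) (intExp (n+1))]
    refine integral_congr_ae (.of_forall fun x => ?_)
    ring
  have key : ∫ x, x ^ (n+1) * Real.exp (-(1/2) * x ^ 2)
      = (n : ℝ) * ∫ x, x ^ (n-1) * Real.exp (-(1/2) * x ^ 2) := by
    rw [hsplit] at hzero; linarith
  have conv : ∀ m : ℕ, mmt m = (Real.sqrt (2 * π))⁻¹ * ∫ x, x ^ m * Real.exp (-(1/2) * x ^ 2) := by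
    intro m
    rw [mmt, integral_gamma, ← integral_const_mul]
    refine integral_congr_ae (.of_forall fun x => ?_)
    simp only [pdf_eq]; ring
  rw [conv, conv, key]; ring


noncomputable def μ2 : Measure (ℝ × ℝ) := γ.prod γ
instance : IsProbabilityMeasure (μ2) := by unfold μ2; infer_instance

noncomputable def ev2 (p : MvPolynomial (Fin 2) ℝ) (z : ℝ × ℝ) : ℝ :=
  MvPolynomial.aeval ![z.1, z.2] p

lemma ev2_monomial (d : Fin 2 →₀ ℕ) (c : ℝ) (z : ℝ × ℝ) :
    ev2 (monomial d c) z = c * (z.1 ^ d 0 * z.2 ^ d 1) := by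
  rw [ev2, aeval_monomial]
  rw [Finsupp.prod_fintype _ _ (fun i => pow_zero _), Fin.prod_univ_two]
  simp [Algebra.algebraMap_self_apply]

lemma ev2_add (p q : MvPolynomial (Fin 2) ℝ) (z) : ev2 (p + q) z = ev2 p z + ev2 q z := by
  simp [ev2]

lemma ev2_C_mul (r : ℝ) (p) (z) : ev2 (C r * p) z = r * ev2 p z := by
  simp [ev2]

lemma integrable_ev2_monomial (d : Fin 2 →₀ ℕ) (c : ℝ) :
    Integrable (ev2 (monomial d c)) μ2 := by
  have h := ((intPow (d 0)).mul_prod (intPow (d 1))).const_mul c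
  refine h.congr (.of_forall fun z => ?_)
  rw [ev2_monomial]

lemma ev2_sum {α : Type*} (s : Finset α) (f : α → MvPolynomial (Fin 2) ℝ) (z) :
    ev2 (∑ i ∈ s, f i) z = ∑ i ∈ s, ev2 (f i) z := by
  simp [ev2]

lemma integrable_ev2 (p : MvPolynomial (Fin 2) ℝ) : Integrable (ev2 p) μ2 := by
  have hp : ev2 p = fun z => ∑ d ∈ p.support, ev2 (monomial d (coeff d p)) z := by
    funext z
    conv_lhs => rw [p.as_sum]
    exact ev2_sum _ _ z
  rw [hp]
  exact integrable_finset_sum _ fun d _ => integrable_ev2_monomial d _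

noncomputable def GE (p : MvPolynomial (Fin 2) ℝ) : ℝ := ∫ z, ev2 p z ∂μ2

lemma GE_monomial (d : Fin 2 →₀ ℕ) (c : ℝ) :
    GE (monomial d c) = c * (mmt (d 0) * mmt (d 1)) := by
  rw [GE]
  calc ∫ z, ev2 (monomial d c) z ∂μ2
      = ∫ z : ℝ × ℝ, c * ((fun x => x ^ d 0) z.1 * (fun x => x ^ d 1) z.2) ∂μ2 := by
        refine integral_congr_ae (.of_forall fun z => ?_); rw [ev2_monomial]
    _ = c * ∫ z : ℝ × ℝ, (fun x => x ^ d 0) z.1 * (fun x => x ^ d 1) z.2 ∂μ2 :=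
        integral_const_mul _ _
    _ = c * (mmt (d 0) * mmt (d 1)) := by
        rw [μ2]
        congr 1
        exact integral_prod_mul (fun x => x ^ d 0) (fun x => x ^ d 1)

lemma GE_add (p q : MvPolynomial (Fin 2) ℝ) : GE (p + q) = GE p + GE q := by
  rw [GE, GE, GE, ← integral_add (integrable_ev2 p) (integrable_ev2 q)]
  refine integral_congr_ae (.of_forall fun z => ?_)
  exact ev2_add p q z

lemma GE_C_mul (r : ℝ) (p) : GE (C r * p) = r * GE p := by
  rw [GE, GE, ← integral_const_mul]
  refine integral_congr_ae (.of_forall fun z => ?_)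
  exact ev2_C_mul r p z

lemma GE_sum {α : Type*} (s : Finset α) (f : α → MvPolynomial (Fin 2) ℝ) :
    GE (∑ i ∈ s, f i) = ∑ i ∈ s, GE (f i) := by
  classical
  induction s using Finset.induction_on with
  | empty => simp [GE, ev2]
  | insert _ _ h ih => rw [Finset.sum_insert h, Finset.sum_insert h, GE_add, ih]

lemma GE_stein (i : Fin 2) (p : MvPolynomial (Fin 2) ℝ) :
    GE (X i * p) = GE (MvPolynomial.pderiv i p) := by
  conv_lhs => rw [p.as_sum]
  rw [Finset.mul_sum, GE_sum]
  conv_rhs => rw [p.as_sum]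
  rw [map_sum, GE_sum]
  refine Finset.sum_congr rfl fun d _ => ?_
  rw [MvPolynomial.pderiv_monomial, GE_monomial]
  rw [show (X i : MvPolynomial (Fin 2) ℝ) * monomial d (coeff d p)
    = monomial (d + Finsupp.single i 1) (coeff d p) by
      rw [MvPolynomial.X, MvPolynomial.monomial_mul, one_mul, add_comm], GE_monomial]
  have hi : i = 0 ∨ i = 1 := by omega
  rcases hi with rfl | rfl
  · have h0 : ((d + Finsupp.single (0 : Fin 2) 1 : Fin 2 →₀ ℕ)) 0 = d 0 + 1 := by simp
    have h1 : ((d + Finsupp.single (0 : Fin 2) 1 : Fin 2 →₀ ℕ)) 1 = d 1 := by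
      simp [Finsupp.single_apply]
    have h2 : ((d - Finsupp.single (0 : Fin 2) 1 : Fin 2 →₀ ℕ)) 0 = d 0 - 1 := by simp
    have h3 : ((d - Finsupp.single (0 : Fin 2) 1 : Fin 2 →₀ ℕ)) 1 = d 1 := by
      simp [Finsupp.single_apply]
    rw [h0, h1, h2, h3, mmt_rec (d 0)]
    ring
  · have h0 : ((d + Finsupp.single (1 : Fin 2) 1 : Fin 2 →₀ ℕ)) 0 = d 0 := by
      simp [Finsupp.single_apply]
    have h1 : ((d + Finsupp.single (1 : Fin 2) 1 : Fin 2 →₀ ℕ)) 1 = d 1 + 1 := by simp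
    have h2 : ((d - Finsupp.single (1 : Fin 2) 1 : Fin 2 →₀ ℕ)) 0 = d 0 := by
      simp [Finsupp.single_apply]
    have h3 : ((d - Finsupp.single (1 : Fin 2) 1 : Fin 2 →₀ ℕ)) 1 = d 1 - 1 := by simp
    rw [h0, h1, h2, h3, mmt_rec (d 1)]
    ring


lemma GE_sub (p q : MvPolynomial (Fin 2) ℝ) : GE (p - q) = GE p - GE q := by
  have h := GE_add (p - q) q
  rw [sub_add_cancel] at h
  linarith

-- derivative of hermite
lemma derivative_hermite : ∀ n : ℕ,
    Polynomial.derivative (Polynomial.hermite n) = n • Polynomial.hermite (n - 1) := by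
  have key : ∀ n : ℕ,
      Polynomial.derivative (Polynomial.hermite n) = n • Polynomial.hermite (n - 1) ∧
      Polynomial.derivative (Polynomial.hermite (n+1)) = (n+1) • Polynomial.hermite n := by
    intro n
    induction n with
    | zero =>
      refine ⟨by simp [Polynomial.hermite_zero], ?_⟩
      rw [Polynomial.hermite_one]
      simp [Polynomial.hermite_zero]
    | succ m ih =>
      refine ⟨ih.2, ?_⟩
      rw [Polynomial.hermite_succ (m+1), Polynomial.derivative_sub, Polynomial.derivative_mul,
        Polynomial.derivative_X, one_mul, ih.2, map_nsmul]
      have h2 : Polynomial.X * ((m+1) • Polynomial.hermite m)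
          - (m+1) • Polynomial.derivative (Polynomial.hermite m)
          = (m+1) • Polynomial.hermite (m+1) := by
        rw [mul_smul_comm, ← smul_sub, ← Polynomial.hermite_succ]
      rw [add_sub_assoc, h2]
      conv_rhs => rw [succ_nsmul]
      abel
  exact fun n => (key n).1

-- chain rule
lemma pderiv_polyaeval (i : Fin 2) (s : MvPolynomial (Fin 2) ℝ) (q : Polynomial ℤ) :
    MvPolynomial.pderiv i (Polynomial.aeval s q)
      = Polynomial.aeval s (Polynomial.derivative q) * MvPolynomial.pderiv i s := by
  induction q using Polynomial.induction_on' with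
  | add p q hp hq => simp only [map_add, hp, hq]; ring
  | monomial n a =>
    rw [Polynomial.aeval_monomial, Polynomial.derivative_monomial, Polynomial.aeval_monomial]
    have hc : ∀ b : ℤ, (algebraMap ℤ (MvPolynomial (Fin 2) ℝ)) b = C ((b : ℝ)) := fun b =>
      (map_intCast (algebraMap ℤ (MvPolynomial (Fin 2) ℝ)) b).trans
        (map_intCast (C : ℝ →+* MvPolynomial (Fin 2) ℝ) b).symm
    rw [hc, hc, show (((a * (n:ℕ) : ℤ)) : ℝ) = (a:ℝ) * n from by push_cast; ring]
    rw [MvPolynomial.pderiv_C_mul, Derivation.leibniz_pow]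
    rw [smul_eq_mul, nsmul_eq_mul, _root_.map_mul, map_natCast]
    push_cast
    ring


lemma GE_one : GE 1 = 1 := by
  have : ev2 1 = fun _ => (1 : ℝ) := by funext z; simp [ev2]
  rw [GE, this, integral_const]
  simp


-- linear form and Hermite compositions
noncomputable def lin (v : Fin 2 → ℝ) : MvPolynomial (Fin 2) ℝ := C (v 0) * X 0 + C (v 1) * X 1

noncomputable def HP (n : ℕ) (v : Fin 2 → ℝ) : MvPolynomial (Fin 2) ℝ :=
  Polynomial.aeval (lin v) (Polynomial.hermite n)

lemma HP_zero (v) : HP 0 v = 1 := by simp [HP, Polynomial.hermite_zero]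

lemma pderiv_lin (i : Fin 2) (v) : MvPolynomial.pderiv i (lin v) = C (v i) := by
  have hi : i = 0 ∨ i = 1 := by omega
  rcases hi with rfl | rfl <;>
    simp [lin, MvPolynomial.pderiv_C_mul, MvPolynomial.pderiv_X_self,
      MvPolynomial.pderiv_X_of_ne, MvPolynomial.pderiv_X]

lemma pderiv_HP (i : Fin 2) (n : ℕ) (v) :
    MvPolynomial.pderiv i (HP n v) = C ((n : ℝ) * v i) * HP (n - 1) v := by
  rw [HP, pderiv_polyaeval, derivative_hermite, pderiv_lin, map_nsmul]
  rw [nsmul_eq_mul, show ((n : MvPolynomial (Fin 2) ℝ)) = C ((n : ℝ)) from by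
    simp [map_natCast]]
  rw [_root_.map_mul, HP]
  ring

lemma HP_succ (n : ℕ) (v) :
    HP (n + 1) v = lin v * HP n v - C ((n : ℝ)) * HP (n - 1) v := by
  rw [HP, Polynomial.hermite_succ, map_sub, _root_.map_mul, Polynomial.aeval_X, derivative_hermite,
    map_nsmul, nsmul_eq_mul, show ((n : MvPolynomial (Fin 2) ℝ)) = C ((n : ℝ)) from by
      simp [map_natCast]]
  rfl

-- the key bilinear integrals
noncomputable def JJ (a b : Fin 2 → ℝ) (k ℓ : ℕ) : ℝ := GE (HP k a * HP ℓ b)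

noncomputable def dt (a b : Fin 2 → ℝ) : ℝ := a 0 * b 0 + a 1 * b 1

lemma GE_lin_mul (c a b : Fin 2 → ℝ) (k ℓ : ℕ) :
    GE (lin c * (HP k a * HP ℓ b))
      = dt c a * k * JJ a b (k-1) ℓ + dt c b * ℓ * JJ a b k (ℓ-1) := by
  have hx : ∀ i : Fin 2, GE (X i * (HP k a * HP ℓ b))
      = a i * k * JJ a b (k-1) ℓ + b i * ℓ * JJ a b k (ℓ-1) := by
    intro i
    rw [GE_stein, MvPolynomial.pderiv_mul, pderiv_HP, pderiv_HP]
    rw [show C ((k : ℝ) * a i) * HP (k-1) a * HP ℓ b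
        = C ((k : ℝ) * a i) * (HP (k-1) a * HP ℓ b) from by ring]
    rw [show HP k a * (C ((ℓ : ℝ) * b i) * HP (ℓ-1) b)
        = C ((ℓ : ℝ) * b i) * (HP k a * HP (ℓ-1) b) from by ring]
    rw [GE_add, GE_C_mul, GE_C_mul, JJ, JJ]
    ring
  rw [show lin c * (HP k a * HP ℓ b)
      = C (c 0) * (X 0 * (HP k a * HP ℓ b)) + C (c 1) * (X 1 * (HP k a * HP ℓ b)) from by
    rw [lin]; ring]
  rw [GE_add, GE_C_mul, GE_C_mul, hx 0, hx 1, dt, dt]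
  ring

lemma JJ_rec_l (a b : Fin 2 → ℝ) (k ℓ : ℕ) :
    JJ a b k (ℓ + 1) = dt a b * k * JJ a b (k-1) ℓ + (dt b b - 1) * ℓ * JJ a b k (ℓ-1) := by
  rw [JJ, HP_succ]
  rw [show HP k a * (lin b * HP ℓ b - C ((ℓ:ℝ)) * HP (ℓ-1) b)
      = lin b * (HP k a * HP ℓ b) - C ((ℓ:ℝ)) * (HP k a * HP (ℓ-1) b) from by ring]
  rw [GE_sub, GE_C_mul, GE_lin_mul]
  rw [show dt b a = dt a b from by rw [dt, dt]; ring]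
  rw [← JJ]
  ring

lemma JJ_rec_k (a b : Fin 2 → ℝ) (k : ℕ) :
    JJ a b (k + 1) 0 = (dt a a - 1) * k * JJ a b (k-1) 0 := by
  rw [JJ, HP_succ]
  rw [show (lin a * HP k a - C ((k:ℝ)) * HP (k-1) a) * HP 0 b
      = lin a * (HP k a * HP 0 b) - C ((k:ℝ)) * (HP (k-1) a * HP 0 b) from by ring]
  rw [GE_sub, GE_C_mul, GE_lin_mul, ← JJ]
  rw [Nat.cast_zero]
  ring

lemma JJ_zero_zero (a b : Fin 2 → ℝ) : JJ a b 0 0 = 1 := by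
  rw [JJ, HP_zero, HP_zero, one_mul, GE_one]


section Rec

variable (sx ρ : ℝ) (J : ℕ → ℕ → ℝ)
  (hJ00 : J 0 0 = 1)
  (hrecl : ∀ k ℓ : ℕ, J k (ℓ + 1) = ρ * k * J (k-1) ℓ)
  (hreck : ∀ k : ℕ, J (k + 1) 0 = (sx - 1) * k * J (k-1) 0)

include hJ00 hrecl hreck

lemma J_diag : ∀ p : ℕ,
    J (2*p) 0 = (sx - 1)^p * ((2*p).factorial / ((p.factorial : ℝ) * 2^p)) ∧ J (2*p+1) 0 = 0 := by
  intro p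
  induction p with
  | zero =>
    constructor
    · simpa [Nat.factorial] using hJ00
    · simpa using hreck 0
  | succ p ih =>
    have h2 : 2*(p+1) = (2*p+1)+1 := by ring
    constructor
    · rw [h2, hreck (2*p+1)]
      rw [show (2*p+1) - 1 = 2*p from by omega, ih.1]
      rw [show ((2*p+1)+1 : ℕ) = 2*(p+1) from by omega]
      have hfac : ((2*(p+1)).factorial : ℝ) = (2*p+2) * ((2*p+1) * ((2*p).factorial : ℝ)) := by
        rw [show 2*(p+1) = (2*p+1)+1 from by ring, Nat.factorial_succ, Nat.factorial_succ]
        push_cast; ring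
      have hfac2 : ((p+1).factorial : ℝ) = (p+1) * (p.factorial : ℝ) := by
        rw [Nat.factorial_succ]; push_cast; ring
      rw [hfac, hfac2]
      have hp : (p.factorial : ℝ) ≠ 0 := by positivity
      have h2p : (2:ℝ)^p ≠ 0 := by positivity
      field_simp
      push_cast
      ring
    · rw [show 2*(p+1)+1 = (2*(p+1))+1 from rfl, hreck (2*(p+1))]
      rw [show (2*(p+1)) - 1 = 2*p+1 from by omega, ih.2]
      ring

lemma J_closed : ∀ ℓ k : ℕ, J k ℓ =
    if ℓ ≤ k ∧ Even (k - ℓ) then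
      ρ^ℓ * (sx - 1)^((k-ℓ)/2) * ((k.factorial : ℝ) / ((((k-ℓ)/2).factorial : ℝ) * 2^((k-ℓ)/2)))
    else 0 := by
  intro ℓ
  induction ℓ with
  | zero =>
    intro k
    rcases Nat.even_or_odd k with he | ho
    · obtain ⟨p, hp⟩ := id he
      rw [if_pos ⟨Nat.zero_le k, by simpa using he⟩]
      have hk : k = 2*p := by omega
      subst hk
      rw [(J_diag sx ρ J hJ00 hrecl hreck p).1]
      rw [show (2*p - 0) = 2*p from rfl, show (2*p)/2 = p from by omega]
      simp
    · rw [if_neg]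
      · obtain ⟨p, hp⟩ := ho
        subst hp
        simpa using (J_diag sx ρ J hJ00 hrecl hreck p).2
      · rintro ⟨-, he⟩
        simp only [Nat.sub_zero] at he
        exact (Nat.not_even_iff_odd.2 ho) he
  | succ ℓ ih =>
    intro k
    cases k with
    | zero =>
      rw [hrecl 0 ℓ]
      rw [if_neg (by rintro ⟨h, -⟩; omega)]
      simp
    | succ k =>
      rw [hrecl (k+1) ℓ, show (k+1) - 1 = k from rfl, ih k]
      have hcond : (ℓ + 1 ≤ k + 1 ∧ Even (k + 1 - (ℓ + 1))) ↔ (ℓ ≤ k ∧ Even (k - ℓ)) := by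
        rw [Nat.succ_sub_succ]
        exact ⟨fun ⟨h1, h2⟩ => ⟨by omega, h2⟩, fun ⟨h1, h2⟩ => ⟨by omega, h2⟩⟩
      by_cases hc : ℓ ≤ k ∧ Even (k - ℓ)
      · rw [if_pos hc, if_pos (hcond.2 hc)]
        rw [Nat.succ_sub_succ]
        rw [Nat.factorial_succ]
        push_cast
        ring
      · rw [if_neg hc, if_neg (fun h => hc (hcond.1 h))]
        ring

end Rec


lemma ev2_lin (v : Fin 2 → ℝ) (z : ℝ × ℝ) : ev2 (lin v) z = v 0 * z.1 + v 1 * z.2 := by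
  simp [ev2, lin]

lemma ev2_HP (n : ℕ) (v : Fin 2 → ℝ) (z : ℝ × ℝ) :
    ev2 (HP n v) z = Polynomial.aeval (ev2 (lin v) z) (Polynomial.hermite n) := by
  rw [ev2, HP, ev2]
  exact (Polynomial.aeval_algHom_apply
    ((MvPolynomial.aeval ![z.1, z.2] : MvPolynomial (Fin 2) ℝ →ₐ[ℝ] ℝ).restrictScalars ℤ)
    (lin v) (Polynomial.hermite n)).symm

lemma ev2_mul (p q : MvPolynomial (Fin 2) ℝ) (z) : ev2 (p * q) z = ev2 p z * ev2 q z := by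
  simp [ev2]


end Stm12

open Stm12 Real

/-- For `(x,y)` centered bivariate Gaussian with covariance
`[[σx², σxy],[σxy, σy²]]`, `σy² > 0`: if `k ≥ ℓ` and `k − ℓ` is even,
`E[h_k(x)·h_ℓ(y/σy)] = √(k!/ℓ!) · (((k−ℓ)/2)!·2^{(k−ℓ)/2})⁻¹ · (σx²−1)^{(k−ℓ)/2} · (σxy/σy)^ℓ`,
and otherwise the expectation vanishes. -/
theorem statement12 (sx sxy sy : ℝ) (hsy : 0 < sy)
    (hM : (!![sx, sxy; sxy, sy]).PosSemidef) (k ℓ : ℕ) :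
    (∫ w, hermiteFn k (w 0) * hermiteFn ℓ (w 1 / Real.sqrt sy)
        ∂(gaussianOf !![sx, sxy; sxy, sy]))
      = if ℓ ≤ k ∧ Even (k - ℓ) then
          Real.sqrt ((k.factorial : ℝ) / (ℓ.factorial : ℝ)) *
            (1 / ((((k - ℓ) / 2).factorial : ℝ) * 2 ^ ((k - ℓ) / 2))) *
            (sx - 1) ^ ((k - ℓ) / 2) * (sxy / Real.sqrt sy) ^ ℓ
        else 0 := by
  set A := !![sx, sxy; sxy, sy] with hA
  have hBdef : matSqrt A = hM.1.eigenvectorUnitary.1 *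
      diagonal ((↑) ∘ Real.sqrt ∘ hM.1.eigenvalues) *
      (star hM.1.eigenvectorUnitary : Matrix (Fin 2) (Fin 2) ℝ) := dif_pos hM
  set B := matSqrt A with hBset
  have hUT : (star hM.1.eigenvectorUnitary : Matrix (Fin 2) (Fin 2) ℝ)
      = (hM.1.eigenvectorUnitary.1)ᵀ := by
    rw [Matrix.star_eq_conjTranspose, Matrix.conjTranspose_eq_transpose_of_trivial]
  have hBsym : ∀ i j, B i j = B j i := by
    intro i j
    rw [hBdef, hUT]
    have hT : (hM.1.eigenvectorUnitary.1 * diagonal ((↑) ∘ Real.sqrt ∘ hM.1.eigenvalues) *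
        (hM.1.eigenvectorUnitary.1)ᵀ)ᵀ = hM.1.eigenvectorUnitary.1 *
        diagonal ((↑) ∘ Real.sqrt ∘ hM.1.eigenvalues) * (hM.1.eigenvectorUnitary.1)ᵀ := by
      rw [transpose_mul, transpose_mul, transpose_transpose, diagonal_transpose, Matrix.mul_assoc]
    exact (congrFun (congrFun hT i) j).symm
  have hBB : B * B = A := by
    rw [hBdef]
    have hS := hM.1.spectral_theorem
    rw [Unitary.conjStarAlgAut_apply] at hS
    conv_rhs => rw [hS]
    have hUU := Unitary.coe_star_mul_self hM.1.eigenvectorUnitary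
    have hDD : diagonal ((↑) ∘ Real.sqrt ∘ hM.1.eigenvalues) *
        diagonal ((↑) ∘ Real.sqrt ∘ hM.1.eigenvalues)
        = diagonal (RCLike.ofReal ∘ hM.1.eigenvalues : Fin 2 → ℝ) := by
      rw [diagonal_mul_diagonal]; congr 1; funext i
      simp [Real.mul_self_sqrt (hM.eigenvalues_nonneg i)]
    calc _ = hM.1.eigenvectorUnitary.1 * (diagonal ((↑) ∘ Real.sqrt ∘ hM.1.eigenvalues) *
          ((star hM.1.eigenvectorUnitary : Matrix (Fin 2) (Fin 2) ℝ) * hM.1.eigenvectorUnitary.1) *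
          diagonal ((↑) ∘ Real.sqrt ∘ hM.1.eigenvalues)) *
          (star hM.1.eigenvectorUnitary : Matrix (Fin 2) (Fin 2) ℝ) := by
          simp only [Matrix.mul_assoc]
      _ = _ := by rw [hUU, Matrix.mul_one, hDD]
  -- the two vectors
  set a : Fin 2 → ℝ := fun j => B 0 j with ha
  set b : Fin 2 → ℝ := fun j => B 1 j / Real.sqrt sy with hb
  have hsqrt_pos : 0 < Real.sqrt sy := Real.sqrt_pos.2 hsy
  have hsqs : Real.sqrt sy * Real.sqrt sy = sy := Real.mul_self_sqrt hsy.le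
  have hBBe : ∀ i j, B i 0 * B 0 j + B i 1 * B 1 j = A i j := by
    intro i j
    rw [← hBB]
    simp [Matrix.mul_apply, Fin.sum_univ_two]
  have hA00 : A 0 0 = sx := by simp [hA]
  have hA01 : A 0 1 = sxy := by simp [hA]
  have hA11 : A 1 1 = sy := by simp [hA]
  have hsne : Real.sqrt sy ≠ 0 := ne_of_gt hsqrt_pos
  have h01 : B 0 1 = B 1 0 := hBsym 0 1
  have haa : dt a a = sx := by
    have h := hBBe 0 0
    rw [hA00] at h
    simp only [dt, ha]
    linear_combination h + B 0 1 * h01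
  have hab : dt a b = sxy / Real.sqrt sy := by
    have h := hBBe 0 1
    rw [hA01] at h
    simp only [dt, ha, hb]
    field_simp
    linear_combination h - B 0 0 * h01
  have hbb : dt b b = 1 := by
    have h := hBBe 1 1
    rw [hA11] at h
    simp only [dt, hb]
    rw [div_mul_div_comm, div_mul_div_comm, hsqs, ← add_div,
      div_eq_one_iff_eq hsy.ne']
    linear_combination h - B 1 0 * h01
  -- recurrences for JJ a b
  set ρ := sxy / Real.sqrt sy with hρ
  have hrecl : ∀ k ℓ : ℕ, JJ a b k (ℓ + 1) = ρ * k * JJ a b (k-1) ℓ := by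
    intro k ℓ
    rw [JJ_rec_l, hbb, hab]
    ring
  have hreck : ∀ k : ℕ, JJ a b (k + 1) 0 = (sx - 1) * k * JJ a b (k-1) 0 := by
    intro k
    rw [JJ_rec_k, haa]
  have hJform := J_closed sx ρ (JJ a b) (JJ_zero_zero a b) hrecl hreck ℓ k
  -- transfer the integral
  have hcont : Continuous fun w : Fin 2 → ℝ =>
      hermiteFn k (w 0) * hermiteFn ℓ (w 1 / Real.sqrt sy) := by
    unfold hermiteFn
    exact (((Polynomial.hermite k).continuous_aeval.comp (continuous_apply 0)).div_const _).mul
      (((Polynomial.hermite ℓ).continuous_aeval.comp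
        ((continuous_apply 1).div_const _)).div_const _)
  have step1 : (∫ w, hermiteFn k (w 0) * hermiteFn ℓ (w 1 / Real.sqrt sy) ∂(gaussianOf A))
      = ∫ z, hermiteFn k ((B *ᵥ z) 0) * hermiteFn ℓ ((B *ᵥ z) 1 / Real.sqrt sy)
          ∂(stdGaussian (Fin 2)) := by
    rw [gaussianOf, integral_map (measurable_matMulVec _).aemeasurable
      hcont.aestronglyMeasurable]
  have hMP := (measurePreserving_finTwoArrow (α := ℝ) γ)
  have step2 : (∫ z, hermiteFn k ((B *ᵥ z) 0) * hermiteFn ℓ ((B *ᵥ z) 1 / Real.sqrt sy)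
          ∂(stdGaussian (Fin 2)))
      = ∫ z : ℝ × ℝ, ev2 (HP k a * HP ℓ b) z / (Real.sqrt k.factorial * Real.sqrt ℓ.factorial)
          ∂μ2 := by
    rw [show (stdGaussian (Fin 2)) = Measure.pi fun _ => γ from rfl, μ2]
    rw [← hMP.integral_comp MeasurableEquiv.finTwoArrow.measurableEmbedding]
    refine integral_congr_ae (.of_forall fun z => ?_)
    beta_reduce
    have hz0 : (MeasurableEquiv.finTwoArrow (α := ℝ) z).1 = z 0 := rfl
    have hz1 : (MeasurableEquiv.finTwoArrow (α := ℝ) z).2 = z 1 := rfl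
    rw [ev2_mul, ev2_HP, ev2_HP, ev2_lin, ev2_lin, hz0, hz1]
    have hv0 : (B *ᵥ z) 0 = a 0 * z 0 + a 1 * z 1 := by
      simp [Matrix.mulVec, dotProduct, Fin.sum_univ_two, ha]
    have hv1 : (B *ᵥ z) 1 / Real.sqrt sy = b 0 * z 0 + b 1 * z 1 := by
      simp only [hb]
      rw [show (B *ᵥ z) 1 = B 1 0 * z 0 + B 1 1 * z 1 from by
        simp [Matrix.mulVec, dotProduct, Fin.sum_univ_two]]
      ring
    rw [hv0, hv1, hermiteFn, hermiteFn]
    ring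
  rw [step1, step2, integral_div, ← Stm12.GE, ← JJ, hJform]
  -- final arithmetic
  by_cases hc : ℓ ≤ k ∧ Even (k - ℓ)
  · rw [if_pos hc, if_pos hc]
    have hkf : (0:ℝ) < (k.factorial : ℝ) := by positivity
    have hlf : (0:ℝ) < (ℓ.factorial : ℝ) := by positivity
    have hpf : (0:ℝ) < (((k-ℓ)/2).factorial : ℝ) := by positivity
    have h2p : (0:ℝ) < (2:ℝ)^((k-ℓ)/2) := by positivity
    have hsk : Real.sqrt (k.factorial) * Real.sqrt (k.factorial) = (k.factorial : ℝ) :=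
      Real.mul_self_sqrt hkf.le
    have hdiv : Real.sqrt ((k.factorial : ℝ) / (ℓ.factorial : ℝ))
        = Real.sqrt (k.factorial) / Real.sqrt (ℓ.factorial) :=
      Real.sqrt_div hkf.le _
    rw [hdiv]
    have hskpos : (0:ℝ) < Real.sqrt (k.factorial) := Real.sqrt_pos.2 hkf
    have hslpos : (0:ℝ) < Real.sqrt (ℓ.factorial) := Real.sqrt_pos.2 hlf
    field_simp
    linear_combination (-((sxy / Real.sqrt sy) ^ ℓ * (sx - 1) ^ ((k - ℓ) / 2))) * hsk
  · rw [if_neg hc, if_neg hc, zero_div]
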